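/- Let n ≥ 3 be an integer and 0 ≤ k ≤ n−2. Let α_1,…,α_n be real numbers with α_{k+1} < α_i < α_n for every i ∈ {1,…,n−1}\{k+1}. Define (n−1)-tuples z and w of positive reals by z_p = α_{⟨k+1−p⟩} − α_{k+1} (where ⟨m⟩ denotes the representative of m modulo n in {1,…,n}) for p = 1,…,n−1, and w_p = α_n − α_p for p = 1,…,n−1. Then the map φ(n,k) sends (z,w) to (w,z); that is, the output state y′ defined by y′_j = w_j·(z_{⟨k+2−j⟩}+w_{⟨j−1⟩})/(z_{⟨k+1−j⟩}+w_j) equals w componentwise, and the output carrier z′ defined by z′_j = z_j·(z_{⟨j+1⟩}+w_{⟨k−j⟩})/(z_j+w_{⟨k+1−j⟩}) equals z componentwise (with the convention z_n = w_n = 0). In other words, (w,z) is a commuting pair (vacuum state and initial carrier) for φ(n,k). -/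
import Mathlib


/-- The commuting pair (vacuum state `w`, initial carrier `z`) for `φ(n,k)`.
Tuples of length `n-1` are modelled as functions on `ZMod n`, with the index class `0`
corresponding to the subscript `n` (the convention `z_n = w_n = 0`), and the entries
for subscripts `1,…,n-1` given on the nonzero classes. -/
theorem stmt_0 (n k : ℕ) (hn : 3 ≤ n) (hk : k ≤ n - 2)
    (α : ZMod n → ℝ)
    (hα : ∀ i : ZMod n, i ≠ 0 → i ≠ ((k + 1 : ℕ) : ZMod n) →
      α ((k + 1 : ℕ) : ZMod n) < α i ∧ α i < α 0)
    (z w : ZMod n → ℝ)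
    (hz0 : z 0 = 0) (hw0 : w 0 = 0)
    (hz : ∀ p : ZMod n, p ≠ 0 →
      z p = α (((k + 1 : ℕ) : ZMod n) - p) - α ((k + 1 : ℕ) : ZMod n))
    (hw : ∀ p : ZMod n, p ≠ 0 → w p = α 0 - α p) :
    ∀ j : ZMod n, j ≠ 0 →
      w j * (z (((k + 2 : ℕ) : ZMod n) - j) + w (j - 1)) /
          (z (((k + 1 : ℕ) : ZMod n) - j) + w j) = w j ∧
      z j * (z (j + 1) + w (((k : ℕ) : ZMod n) - j)) /
          (z j + w (((k + 1 : ℕ) : ZMod n) - j)) = z j := by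
  haveI : NeZero n := ⟨by omega⟩
  set K : ZMod n := ((k + 1 : ℕ) : ZMod n) with hK
  have hz' : ∀ p : ZMod n, z p = α (K - p) - α K := by
    intro p
    by_cases hp : p = 0
    · simp [hp, hz0]
    · exact hz p hp
  have hw' : ∀ p : ZMod n, w p = α 0 - α p := by
    intro p
    by_cases hp : p = 0
    · simp [hp, hw0]
    · exact hw p hp
  have hKne : K ≠ 0 := by
    rw [hK, Ne, ZMod.natCast_eq_zero_iff]
    intro h
    have := Nat.le_of_dvd (by omega) h
    omega
  have h1ne : (1 : ZMod n) ≠ 0 := by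
    have : ((1 : ℕ) : ZMod n) ≠ 0 := by
      rw [Ne, ZMod.natCast_eq_zero_iff]
      intro h; have := Nat.le_of_dvd (by omega) h; omega
    simpa using this
  have h2ne : (2 : ZMod n) ≠ 0 := by
    have : ((2 : ℕ) : ZMod n) ≠ 0 := by
      rw [Ne, ZMod.natCast_eq_zero_iff]
      intro h; have := Nat.le_of_dvd (by omega) h; omega
    simpa using this
  have h12 : (1 : ZMod n) ≠ 2 := by
    intro h
    apply h1ne
    have : (2 : ZMod n) - 1 = 0 := by rw [← h]; ring
    have h2 : (2 : ZMod n) - 1 = 1 := by ring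
    rw [h2] at this; exact this
  have hlt : α K < α 0 := by
    by_cases hc : K = 1
    · obtain ⟨ha, hb⟩ := hα 2 h2ne (by rw [hc]; exact fun h => h12 h.symm)
      linarith
    · obtain ⟨ha, hb⟩ := hα 1 h1ne (fun h => hc h.symm)
      linarith
  have htne : α 0 - α K ≠ 0 := sub_ne_zero.mpr (ne_of_gt hlt)
  have e1 : ((k + 2 : ℕ) : ZMod n) = K + 1 := by push_cast [hK]; ring
  have e0 : ((k : ℕ) : ZMod n) = K - 1 := by
    have : ((k + 1 : ℕ) : ZMod n) = (k : ZMod n) + 1 := by push_cast; ring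
    rw [hK, this]; ring
  intro j hj
  constructor
  · rw [e1]
    have hA : z (K + 1 - j) + w (j - 1) = α 0 - α K := by
      rw [hz', hw']
      have : K - (K + 1 - j) = j - 1 := by ring
      rw [this]; ring
    have hB : z (K - j) + w j = α 0 - α K := by
      rw [hz', hw']
      have : K - (K - j) = j := by ring
      rw [this]; ring
    rw [hA, hB, mul_div_assoc, div_self htne, mul_one]
  · rw [e0]
    have hA : z (j + 1) + w (K - 1 - j) = α 0 - α K := by
      rw [hz', hw']
      have : K - (j + 1) = K - 1 - j := by ring
      rw [this]; ring
    have hB : z j + w (K - j) = α 0 - α K := by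
      rw [hz', hw']; ring
    rw [hA, hB, mul_div_assoc, div_self htne, mul_one]
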